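/- Let e₁, f₁, g₁ ∈ ℝ³ and (e₂,e₂'), (f₂,f₂'), (g₂,g₂') be pairs of vectors in ℝ³ such that det(f₁,g₂,g₂'), det(e₁,f₂,f₂'), det(e₂,e₂',g₁) are nonzero. Let r, u, w be nonzero real numbers and let (a,b,c,d), (a',b',c',d'), (a'',b'',c'',d'') be real quadruples with ad−bc ≠ 0, a'd'−b'c' ≠ 0, a''d''−b''c'' ≠ 0. Then the triangle invariant computed from r·e₁, (a·e₂+b·e₂', c·e₂+d·e₂'), u·f₁, (a'·f₂+b'·f₂', c'·f₂+d'·f₂'), w·g₁, (a''·g₂+b''·g₂', c''·g₂+d''·g₂') equals the triangle invariant computed from the original vectors. That is, T(E,F,G) depends only on the lines span(e₁), span(f₁), span(g₁) and the planes span(e₂,e₂'), span(f₂,f₂'), span(g₂,g₂'), not on the chosen spanning vectors. -/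

import Mathlib

/-- The determinant of the 3×3 real matrix with columns `a`, `b`, `c`. -/
noncomputable def det3 (a b c : Fin 3 → ℝ) : ℝ :=
  Matrix.det (Matrix.transpose (Matrix.of ![a, b, c]))
/-- The triangle invariant of a triple of flags `E`, `F`, `G` in `ℝ³`, where the flag `E`
consists of the line spanned by `e₁` and the plane spanned by `e₂, e₂'` (similarly for
`F` and `G`). -/
noncomputable def triangleInv (e₁ e₂ e₂' f₁ f₂ f₂' g₁ g₂ g₂' : Fin 3 → ℝ) : ℝ :=
  (det3 e₂ e₂' f₁ / det3 f₁ g₂ g₂') * (det3 e₁ g₂ g₂' / det3 e₁ f₂ f₂') *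
    (det3 f₂ f₂' g₁ / det3 e₂ e₂' g₁)

lemma det3_eq (a b c : Fin 3 → ℝ) : det3 a b c =
    a 0 * b 1 * c 2 - a 0 * b 2 * c 1 - a 1 * b 0 * c 2 + a 1 * b 2 * c 0
      + a 2 * b 0 * c 1 - a 2 * b 1 * c 0 := by
  simp [det3, Matrix.det_fin_three, Matrix.transpose]; ring

lemma d12 (a b c d : ℝ) (x y z : Fin 3 → ℝ) :
    det3 (a • x + b • y) (c • x + d • y) z = (a * d - b * c) * det3 x y z := by
  simp only [det3_eq, Pi.add_apply, Pi.smul_apply, smul_eq_mul]; ring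

lemma d23 (a b c d : ℝ) (x y z : Fin 3 → ℝ) :
    det3 z (a • x + b • y) (c • x + d • y) = (a * d - b * c) * det3 z x y := by
  simp only [det3_eq, Pi.add_apply, Pi.smul_apply, smul_eq_mul]; ring

lemma d1s (r : ℝ) (x y z : Fin 3 → ℝ) : det3 (r • x) y z = r * det3 x y z := by
  simp only [det3_eq, Pi.smul_apply, smul_eq_mul]; ring

lemma d2s (r : ℝ) (x y z : Fin 3 → ℝ) : det3 x (r • y) z = r * det3 x y z := by
  simp only [det3_eq, Pi.smul_apply, smul_eq_mul]; ring

lemma d3s (r : ℝ) (x y z : Fin 3 → ℝ) : det3 x y (r • z) = r * det3 x y z := by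
  simp only [det3_eq, Pi.smul_apply, smul_eq_mul]; ring

/-- The triangle invariant depends only on the lines `span(e₁), span(f₁), span(g₁)` and
the planes `span(e₂,e₂'), span(f₂,f₂'), span(g₂,g₂')`, not on the chosen spanning
vectors: rescaling each line vector by a nonzero scalar and replacing each spanning pair
of a plane by another basis of the same plane leaves the invariant unchanged. -/
theorem triangleInv_well_defined (e₁ e₂ e₂' f₁ f₂ f₂' g₁ g₂ g₂' : Fin 3 → ℝ)
    (h₂ : det3 f₁ g₂ g₂' ≠ 0) (h₄ : det3 e₁ f₂ f₂' ≠ 0) (h₆ : det3 e₂ e₂' g₁ ≠ 0)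
    (r u w : ℝ) (hr : r ≠ 0) (hu : u ≠ 0) (hw : w ≠ 0)
    (a b c d a' b' c' d' a'' b'' c'' d'' : ℝ)
    (habcd : a * d - b * c ≠ 0) (habcd' : a' * d' - b' * c' ≠ 0)
    (habcd'' : a'' * d'' - b'' * c'' ≠ 0) :
    triangleInv (r • e₁) (a • e₂ + b • e₂') (c • e₂ + d • e₂') (u • f₁)
      (a' • f₂ + b' • f₂') (c' • f₂ + d' • f₂') (w • g₁)
      (a'' • g₂ + b'' • g₂') (c'' • g₂ + d'' • g₂')
    = triangleInv e₁ e₂ e₂' f₁ f₂ f₂' g₁ g₂ g₂' := by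
  simp only [triangleInv, d12, d23, d1s, d2s, d3s]
  field_simp
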